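/- Let G = (V, E) be a finite simple graph and let m ≥ k ≥ 1 be integers. Let T ⊆ V be an m-dominating set of G, let S, P ⊆ V ∖ T, let R ⊆ T, and let J be a set of edges with both endpoints in R such that G[T ∪ S] ∪ J is k-connected and, for every edge uv ∈ J, the induced subgraph G[T ∪ S ∪ P] contains k internally-disjoint u–v paths. Then T ∪ S ∪ P is a (k, m)-cds of G, i.e., T ∪ S ∪ P is an m-dominating set of G and the induced subgraph G[T ∪ S ∪ P] is k-connected. -/

import Mathlib

open SimpleGraph Walk

/-- `HasIDPaths G u v k` : the graph `G` contains `k` pairwise internally disjoint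
`u`-`v` paths, i.e. `k` distinct paths sharing no vertices other than `u` and `v`. -/
def HasIDPaths {V : Type*} (G : SimpleGraph V) (u v : V) (k : ℕ) : Prop :=
  ∃ P : Fin k → G.Path u v, Function.Injective P ∧
    ∀ i j, i ≠ j → ∀ w, w ∈ (P i).val.support → w ∈ (P j).val.support → w = u ∨ w = v

/-- `KConnected G k` : `G` has `k` internally disjoint paths between every pair of nodes. -/
def KConnected {V : Type*} (G : SimpleGraph V) (k : ℕ) : Prop :=
  ∀ u v : V, u ≠ v → HasIDPaths G u v k

namespace MengerAux

variable {V : Type*}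

/-- `Z` meets every `A`-`B` walk of `G`. -/
def Sep (G : SimpleGraph V) (A B Z : Set V) : Prop :=
  ∀ ⦃a b : V⦄, a ∈ A → b ∈ B → ∀ w : G.Walk a b, ∃ z ∈ Z, z ∈ w.support

/-- `k` fully disjoint `A`-`B` paths. -/
def HasLinkage (G : SimpleGraph V) (A B : Set V) (k : ℕ) : Prop :=
  ∃ (a b : Fin k → V) (p : ∀ i, G.Walk (a i) (b i)),
    (∀ i, a i ∈ A) ∧ (∀ i, b i ∈ B) ∧ (∀ i, (p i).IsPath) ∧
      ∀ i j, i ≠ j → ∀ w, w ∈ (p i).support → w ∈ (p j).support → False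

lemma exists_firstHit {G : SimpleGraph V} {a b : V} (w : G.Walk a b) (X : Set V)
    (hhit : ∃ v ∈ w.support, v ∈ X) :
    ∃ (s : V) (_ : s ∈ X) (w₁ : G.Walk a s),
      (∀ v ∈ w₁.support, v ∈ w.support) ∧ (∀ e ∈ w₁.edges, e ∈ w.edges) ∧
      (∀ v ∈ w₁.support, v ∈ X → v = s) := by
  induction w with
  | nil =>
    obtain ⟨v, hv, hvX⟩ := hhit
    simp only [support_nil, List.mem_singleton] at hv
    subst hv
    exact ⟨v, hvX, Walk.nil, by simp, by simp, by simp⟩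
  | @cons a c b h p ih =>
    by_cases ha : a ∈ X
    · exact ⟨a, ha, Walk.nil, by simp, by simp, by simp⟩
    · have : ∃ v ∈ p.support, v ∈ X := by
        obtain ⟨v, hv, hvX⟩ := hhit
        rcases (by simpa using hv : v = a ∨ v ∈ p.support) with rfl | hv'
        · exact absurd hvX ha
        · exact ⟨v, hv', hvX⟩
      obtain ⟨s, hs, w₁, hsup, hedg, honly⟩ := ih this
      refine ⟨s, hs, Walk.cons h w₁, ?_, ?_, ?_⟩
      · intro v hv
        rcases (by simpa using hv : v = a ∨ v ∈ w₁.support) with rfl | hv'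
        · simp
        · simp [hsup v hv']
      · intro e he
        rcases (by simpa using he : e = s(a, c) ∨ e ∈ w₁.edges) with rfl | he'
        · simp
        · simp [hedg e he']
      · intro v hv hvX
        rcases (by simpa using hv : v = a ∨ v ∈ w₁.support) with rfl | hv'
        · exact absurd hvX ha
        · exact honly v hv' hvX

/-- A walk whose supporting vertices all avoid a vertex `x` never has `x` on it
provided edges of the graph never touch `x`... (helper): if the start differs from `x`
and no edge of `G'` is incident to `x`, then `x` is not on any walk. -/
lemma not_mem_support_of_adj_ne {G : SimpleGraph V} {x : V}
    (hx : ∀ a b, G.Adj a b → a ≠ x ∧ b ≠ x) :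
    ∀ {a b : V} (w : G.Walk a b), a ≠ x → x ∉ w.support := by
  intro a b w
  induction w with
  | nil => intro ha; simpa using fun h => ha h.symm
  | @cons a c b h p ih =>
    intro ha
    simp only [support_cons, List.mem_cons]
    rintro (rfl | hx')
    · exact ha rfl
    · exact ih (hx _ _ h).2 hx'

/-- Two walks with the same endpoints and the same support are equal. -/
lemma eq_of_support_eq {G : SimpleGraph V} :
    ∀ {a b : V} (w₁ w₂ : G.Walk a b), w₁.support = w₂.support → w₁ = w₂ := by
  intro a b w₁
  induction w₁ with
  | nil =>
    intro w₂ h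
    cases w₂ with
    | nil => rfl
    | cons h' p => simp only [support_nil, support_cons] at h
                   have := congrArg List.length h
                   simp at this
  | @cons a c b h p ih =>
    intro w₂ hs
    cases w₂ with
    | nil =>
      have := congrArg List.length hs
      simp at this
    | @cons a c' b h' p' =>
      simp only [support_cons, List.cons.injEq] at hs
      have hc : c = c' := by
        have := hs.2
        have h1 : p.support.head? = some c := by cases p <;> simp
        have h2 : p'.support.head? = some c' := by cases p' <;> simp
        rw [this, h2] at h1
        exact (Option.some.injEq _ _ ▸ h1).symm
      subst hc
      rw [ih p' hs.2]

noncomputable def μ [Fintype V] (G : SimpleGraph V) : ℕ := {p : V × V | G.Adj p.1 p.2}.ncard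

lemma μ_deleteEdges_lt [Fintype V] {G : SimpleGraph V} {x y : V} (hxy : G.Adj x y) :
    μ (G.deleteEdges {s(x, y)}) < μ G := by
  apply Set.ncard_lt_ncard
  · constructor
    · rintro ⟨a, b⟩ hab
      exact hab.1
    · intro hsub
      have := hsub (a := (x, y)) hxy
      simp [deleteEdges_adj] at this
  · exact Set.toFinite _

def contract (G : SimpleGraph V) (x y : V) : SimpleGraph V where
  Adj a b := a ≠ b ∧ a ≠ x ∧ b ≠ x ∧
    (G.Adj a b ∨ (a = y ∧ G.Adj x b) ∨ (b = y ∧ G.Adj a x))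
  symm := by
    constructor
    rintro a b ⟨h1, h2, h3, h4⟩
    refine ⟨h1.symm, h3, h2, ?_⟩
    rcases h4 with h | ⟨ha, h⟩ | ⟨hb, h⟩
    · exact Or.inl h.symm
    · exact Or.inr (Or.inr ⟨ha, h.symm⟩)
    · exact Or.inr (Or.inl ⟨hb, h.symm⟩)
  loopless := ⟨by rintro a ⟨h1, _⟩; exact h1 rfl⟩

lemma contract_adj_cases {G : SimpleGraph V} {x y a b : V} (h : (contract G x y).Adj a b) :
    (G.Adj a b ∧ a ≠ x ∧ b ≠ x) ∨
    (¬G.Adj a b ∧ a = y ∧ b ≠ y ∧ b ≠ x ∧ G.Adj x b) ∨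
    (¬G.Adj a b ∧ b = y ∧ a ≠ y ∧ a ≠ x ∧ G.Adj a x) := by
  obtain ⟨h1, h2, h3, h4⟩ := h
  by_cases hG : G.Adj a b
  · exact Or.inl ⟨hG, h2, h3⟩
  · rcases h4 with h | ⟨ha, h⟩ | ⟨hb, h⟩
    · exact absurd h hG
    · refine Or.inr (Or.inl ⟨hG, ha, ?_, h3, h⟩)
      intro hb; exact h1 (ha.trans hb.symm)
    · refine Or.inr (Or.inr ⟨hG, hb, ?_, h2, h⟩)
      intro ha; exact h1 (hb.symm ▸ ha ▸ rfl)

lemma μ_contract_lt [Fintype V] {G : SimpleGraph V} {x y : V} (hxy : G.Adj x y) :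
    μ (contract G x y) < μ G := by
  classical
  have hne : x ≠ y := hxy.ne
  set f : V × V → V × V := fun p =>
    if G.Adj p.1 p.2 then p else ((if p.1 = y then x else p.1), (if p.2 = y then x else p.2)) with hf
  have hval : ∀ {a b : V}, (contract G x y).Adj a b →
      (f (a, b) = (a, b) ∧ G.Adj a b ∧ a ≠ x ∧ b ≠ x) ∨
      (f (a, b) = (x, b) ∧ ¬G.Adj a b ∧ a = y ∧ b ≠ y ∧ b ≠ x ∧ G.Adj x b) ∨
      (f (a, b) = (a, x) ∧ ¬G.Adj a b ∧ b = y ∧ a ≠ y ∧ a ≠ x ∧ G.Adj a x) := by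
    intro a b h
    rcases contract_adj_cases h with ⟨hG, h2, h3⟩ | ⟨hG, ha, hb, h3, hadj⟩ | ⟨hG, hb, ha, h2, hadj⟩
    · exact Or.inl ⟨by simp [hf, hG], hG, h2, h3⟩
    · refine Or.inr (Or.inl ⟨?_, hG, ha, hb, h3, hadj⟩)
      subst ha
      simp only [hf]
      simp [hG, hb]
    · refine Or.inr (Or.inr ⟨?_, hG, hb, ha, h2, hadj⟩)
      subst hb
      simp only [hf]
      simp [hG, ha]
  have himg : ∀ p ∈ {p : V × V | (contract G x y).Adj p.1 p.2},
      f p ∈ {p : V × V | G.Adj p.1 p.2} \ {(x, y)} := by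
    rintro ⟨a, b⟩ hab
    rw [Set.mem_setOf_eq] at hab
    rcases hval hab with ⟨he, hG, h2, h3⟩ | ⟨he, hG, ha, hb, h3, hadj⟩ | ⟨he, hG, hb, ha, h2, hadj⟩ <;>
      rw [Set.mem_diff, he, Set.mem_setOf_eq, Set.mem_singleton_iff, Prod.mk.injEq]
    · exact ⟨hG, fun h => h2 h.1⟩
    · exact ⟨hadj, fun h => hb h.2⟩
    · exact ⟨hadj, fun h => h2 h.1⟩
  have hinj : Set.InjOn f {p : V × V | (contract G x y).Adj p.1 p.2} := by
    rintro ⟨a, b⟩ hab ⟨c, d⟩ hcd heq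
    rw [Set.mem_setOf_eq] at hab hcd
    rcases hval hab with ⟨he1, hG1, ha1, hb1⟩ | ⟨he1, hG1, ha1, hb1, hb1', hadj1⟩ |
        ⟨he1, hG1, hb1, ha1, ha1', hadj1⟩ <;>
      rcases hval hcd with ⟨he2, hG2, hc2, hd2⟩ | ⟨he2, hG2, hc2, hd2, hd2', hadj2⟩ |
        ⟨he2, hG2, hd2, hc2, hc2', hadj2⟩ <;>
      rw [he1, he2] at heq <;>
      obtain ⟨q1, q2⟩ := Prod.mk.injEq .. ▸ heq
    · exact Prod.ext q1 q2
    · exact absurd q1 ha1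
    · exact absurd q2 hb1
    · exact absurd q1.symm hc2
    · subst q2
      exact Prod.ext (ha1.trans hc2.symm) rfl
    · exact absurd q2 hb1'
    · exact absurd q2.symm hd2
    · exact absurd q1 ha1'
    · subst q1
      exact Prod.ext rfl (hb1.trans hd2.symm)
  calc μ (contract G x y) ≤ ({p : V × V | G.Adj p.1 p.2} \ {(x, y)}).ncard :=
        Set.ncard_le_ncard_of_injOn f himg hinj (Set.toFinite _)
    _ < μ G := by
        apply Set.ncard_lt_ncard _ (Set.toFinite _)
        constructor
        · exact Set.diff_subset
        · intro hsub
          have := hsub (a := (x, y)) hxy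
          simp at this

lemma contract_walk_not_mem_x {G : SimpleGraph V} {x y : V} {a b : V}
    (w : (contract G x y).Walk a b) (ha : a ≠ x) : x ∉ w.support := by
  refine not_mem_support_of_adj_ne (G := contract G x y) (fun u v h => ?_) w ha
  obtain ⟨-, h2, h3, -⟩ := h
  exact ⟨h2, h3⟩

lemma proj_walk [DecidableEq V] {G : SimpleGraph V} {x y : V} (hxy : G.Adj x y) :
    ∀ {a b : V} (w : G.Walk a b),
      ∃ w' : (contract G x y).Walk (if a = x then y else a) (if b = x then y else b),
        ∀ v ∈ w'.support, ∃ u ∈ w.support, (if u = x then y else u) = v := by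
  have hne : x ≠ y := hxy.ne
  intro a b w
  induction w with
  | nil =>
    rename_i u
    refine ⟨Walk.nil, fun v hv => ⟨u, start_mem_support _, ?_⟩⟩
    have hva : v = (if u = x then y else u) := by simpa using hv
    exact hva.symm
  | @cons a c b h p ih =>
    obtain ⟨w', hw'⟩ := ih
    by_cases heq : (if a = x then y else a) = (if c = x then y else c)
    · refine ⟨w'.copy heq.symm rfl, ?_⟩
      intro v hv
      rw [support_copy] at hv
      obtain ⟨u, hu, huv⟩ := hw' v hv
      exact ⟨u, by simp [hu], huv⟩
    · have hax' : (if a = x then y else a) ≠ x := by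
        by_cases hax : a = x
        · simpa [hax] using hne.symm
        · simpa [hax] using hax
      have hcx' : (if c = x then y else c) ≠ x := by
        by_cases hcx : c = x
        · simpa [hcx] using hne.symm
        · simpa [hcx] using hcx
      have hadj : (contract G x y).Adj (if a = x then y else a) (if c = x then y else c) := by
        refine ⟨heq, hax', hcx', ?_⟩
        by_cases hax : a = x <;> by_cases hcx : c = x
        · exact absurd (hax.trans hcx.symm) h.ne
        · subst hax
          simp only [if_pos rfl, if_neg hcx]
          exact Or.inr (Or.inl ⟨rfl, h⟩)
        · subst hcx
          simp only [if_neg hax, if_pos rfl]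
          exact Or.inr (Or.inr ⟨rfl, h⟩)
        · simp only [if_neg hax, if_neg hcx]
          exact Or.inl h
      refine ⟨Walk.cons hadj w', ?_⟩
      intro v hv
      rcases (by simpa using hv : v = (if a = x then y else a) ∨ v ∈ w'.support) with rfl | hv'
      · exact ⟨a, by simp, rfl⟩
      · obtain ⟨u, hu, huv⟩ := hw' v hv'
        exact ⟨u, by simp [hu], huv⟩

lemma lift_walk {G : SimpleGraph V} {x y : V} (hxy : G.Adj x y) :
    ∀ {a b : V} (w : (contract G x y).Walk a b),
      ∃ w' : G.Walk a b,
        (∀ v ∈ w'.support, v ∈ w.support ∨ v = x) ∧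
        (y ∉ w.support → ∀ v ∈ w'.support, v ∈ w.support) := by
  intro a b w
  induction w with
  | nil => exact ⟨Walk.nil, by simp, by simp⟩
  | @cons a c b h p ih =>
    obtain ⟨w', hw1, hw2⟩ := ih
    have hsupp : (Walk.cons h p).support = a :: p.support := support_cons ..
    rcases contract_adj_cases h with ⟨hG, -, -⟩ | ⟨-, hay, -, -, hG⟩ | ⟨-, hcy, -, -, hG⟩
    · refine ⟨Walk.cons hG w', ?_, ?_⟩
      · intro v hv
        rcases (by simpa using hv : v = a ∨ v ∈ w'.support) with rfl | hv'
        · simp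
        · rcases hw1 v hv' with h' | h'
          · exact Or.inl (by simp [h'])
          · exact Or.inr h'
      · intro hy v hv
        have hy' : y ∉ p.support := fun hh => hy (by simp [hsupp, hh])
        rcases (by simpa using hv : v = a ∨ v ∈ w'.support) with rfl | hv'
        · simp
        · simp [hw2 hy' v hv']
    · -- a = y, G.Adj x c : go y - x - c
      subst hay
      refine ⟨Walk.cons hxy.symm (Walk.cons hG w'), ?_, ?_⟩
      · intro v hv
        simp only [support_cons, List.mem_cons] at hv
        rcases hv with rfl | rfl | hv'
        · simp
        · exact Or.inr rfl
        · rcases hw1 v hv' with h' | h'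
          · exact Or.inl (by simp [h'])
          · exact Or.inr h'
      · intro hy
        exact absurd (by simp [hsupp]) hy
    · -- c = y, G.Adj a x : go a - x - y = c
      subst hcy
      refine ⟨Walk.cons hG (Walk.cons hxy w'), ?_, ?_⟩
      · intro v hv
        simp only [support_cons, List.mem_cons] at hv
        rcases hv with rfl | rfl | hv'
        · simp
        · exact Or.inr rfl
        · rcases hw1 v hv' with h' | h'
          · exact Or.inl (by simp [h'])
          · exact Or.inr h'
      · intro hy
        exact absurd (by simp [hsupp, start_mem_support p]) hy

lemma glue_linkage [Fintype V] [DecidableEq V] {G : SimpleGraph V} {A B X : Set V} {k : ℕ}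
    (hsep : Sep G A B X) (hX : X.ncard = k)
    (LA : HasLinkage G A X k) (LB : HasLinkage G X B k) : HasLinkage G A B k := by
  obtain ⟨aA, bA, pA, haA, hbA, hpathA, hdisjA⟩ := LA
  obtain ⟨aB, bB, pB, haB, hbB, hpathB, hdisjB⟩ := LB
  -- trim the A-fan at the first X-hit
  have hexA : ∀ i, ∃ (s : V) (_ : s ∈ X) (w₁ : G.Walk (aA i) s),
      (∀ v ∈ w₁.support, v ∈ (pA i).support) ∧ (∀ e ∈ w₁.edges, e ∈ (pA i).edges) ∧
      (∀ v ∈ w₁.support, v ∈ X → v = s) :=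
    fun i => exists_firstHit (pA i) X ⟨bA i, end_mem_support _, hbA i⟩
  choose sA hsAX qA hsubA _ honlyA using hexA
  set wA : ∀ i, G.Walk (aA i) (sA i) := fun i => (qA i).bypass with hwA
  have hpathwA : ∀ i, (wA i).IsPath := fun i => (qA i).bypass_isPath
  have hsubwA : ∀ i, ∀ v ∈ (wA i).support, v ∈ (pA i).support :=
    fun i v hv => hsubA i v (support_bypass_subset _ hv)
  have honlywA : ∀ i, ∀ v ∈ (wA i).support, v ∈ X → v = sA i :=
    fun i v hv => honlyA i v (support_bypass_subset _ hv)
  -- trim the B-fan at the last X-hit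
  have hexB : ∀ j, ∃ (t : V) (_ : t ∈ X) (w₁ : G.Walk (bB j) t),
      (∀ v ∈ w₁.support, v ∈ (pB j).reverse.support) ∧
      (∀ e ∈ w₁.edges, e ∈ (pB j).reverse.edges) ∧
      (∀ v ∈ w₁.support, v ∈ X → v = t) :=
    fun j => exists_firstHit (pB j).reverse X
      ⟨aB j, by simp [end_mem_support], haB j⟩
  choose tB htBX qB hsubB _ honlyB using hexB
  set wB : ∀ j, G.Walk (tB j) (bB j) := fun j => (qB j).reverse.bypass with hwB
  have hpathwB : ∀ j, (wB j).IsPath := fun j => bypass_isPath _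
  have hsubwB : ∀ j, ∀ v ∈ (wB j).support, v ∈ (pB j).support := by
    intro j v hv
    have h1 : v ∈ (qB j).reverse.support := support_bypass_subset _ hv
    have h2 : v ∈ (qB j).support := by simpa using h1
    have := hsubB j v h2
    simpa using this
  have honlywB : ∀ j, ∀ v ∈ (wB j).support, v ∈ X → v = tB j := by
    intro j v hv
    exact honlyB j v (by simpa using (support_bypass_subset _ hv))
  -- injectivity of the endpoints
  have hsAinj : Function.Injective sA := by
    intro i j hij
    by_contra hne
    exact hdisjA i j hne (sA i)
      (hsubwA i _ (end_mem_support _)) (hij ▸ hsubwA j _ (end_mem_support _))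
  have htBinj : Function.Injective tB := by
    intro i j hij
    by_contra hne
    exact hdisjB i j hne (tB i)
      (hsubwB i _ (start_mem_support _)) (hij ▸ hsubwB j _ (start_mem_support _))
  -- the bijection matching the fans
  haveI : Fintype ↥X := Fintype.ofFinite _
  have hcardX : Fintype.card ↥X = k := by
    rw [← Nat.card_eq_fintype_card, Nat.card_coe_set_eq, hX]
  have hbijA : Function.Bijective (fun i : Fin k => (⟨sA i, hsAX i⟩ : ↥X)) := by
    rw [Fintype.bijective_iff_injective_and_card]
    exact ⟨fun i j h => hsAinj (congrArg Subtype.val h), by simp [hcardX]⟩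
  have hbijB : Function.Bijective (fun j : Fin k => (⟨tB j, htBX j⟩ : ↥X)) := by
    rw [Fintype.bijective_iff_injective_and_card]
    exact ⟨fun i j h => htBinj (congrArg Subtype.val h), by simp [hcardX]⟩
  set EA := Equiv.ofBijective _ hbijA with hEA
  set EB := Equiv.ofBijective _ hbijB with hEB
  set σ : Fin k → Fin k := fun i => EB.symm (EA i) with hσ
  have hσinj : Function.Injective σ := fun i j h => EA.injective (EB.symm.injective h)
  have hmatch : ∀ i, tB (σ i) = sA i := by
    intro i
    have : EB (EB.symm (EA i)) = EA i := EB.apply_symm_apply _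
    have h2 := congrArg Subtype.val this
    simpa [hσ, hEA, hEB, Equiv.ofBijective] using h2
  -- the master intersection claim
  have master : ∀ i j z, z ∈ (wA i).support → z ∈ (wB j).support → z = sA i ∧ sA i = tB j := by
    intro i j z hz1 hz2
    set C := ((wA i).takeUntil z hz1).append ((wB j).dropUntil z hz2) with hC
    obtain ⟨ξ, hξX, hξC⟩ := hsep (haA i) (hbB j) C
    rw [hC, mem_support_append_iff] at hξC
    have hnodupA : ((wA i).support).Nodup := (hpathwA i).support_nodup
    have hnodupB : ((wB j).support).Nodup := (hpathwB j).support_nodup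
    rcases hξC with hξ1 | hξ2
    · -- ξ on the A-side prefix
      have hξA : ξ ∈ (wA i).support := support_takeUntil_subset _ hz1 hξ1
      have hξs : ξ = sA i := honlywA i ξ hξA hξX
      rw [hξs] at hξ1
      have hzs : z = sA i := by
        by_contra hzs
        have hspec := take_spec (wA i) hz1
        have hsplit : (wA i).support
            = ((wA i).takeUntil z hz1).support ++ ((wA i).dropUntil z hz1).support.tail := by
          rw [← support_append, hspec]
        have hdisj := (List.nodup_append.mp (hsplit ▸ hnodupA)).2.2
        have hend : sA i ∈ ((wA i).dropUntil z hz1).support := end_mem_support _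
        have hcons : ((wA i).dropUntil z hz1).support
            = z :: ((wA i).dropUntil z hz1).support.tail := support_eq_cons _
        rw [hcons] at hend
        rcases List.mem_cons.mp hend with heq | htail
        · exact hzs heq.symm
        · exact hdisj _ hξ1 _ htail rfl
      have hzt : z = tB j := honlywB j z hz2 (by rw [hzs]; exact hsAX i)
      exact ⟨hzs, hzs.symm.trans hzt⟩
    · -- ξ on the B-side suffix
      have hξB : ξ ∈ (wB j).support := support_dropUntil_subset _ hz2 hξ2
      have hξt : ξ = tB j := honlywB j ξ hξB hξX
      rw [hξt] at hξ2
      have hzt : z = tB j := by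
        by_contra hzt
        have hspec := take_spec (wB j) hz2
        have hsplit : (wB j).support
            = ((wB j).takeUntil z hz2).support ++ ((wB j).dropUntil z hz2).support.tail := by
          rw [← support_append, hspec]
        have hdisj := (List.nodup_append.mp (hsplit ▸ hnodupB)).2.2
        have hstart : tB j ∈ ((wB j).takeUntil z hz2).support := start_mem_support _
        have hcons : ((wB j).dropUntil z hz2).support
            = z :: ((wB j).dropUntil z hz2).support.tail := support_eq_cons _
        rw [hcons] at hξ2
        rcases List.mem_cons.mp hξ2 with heq | htail
        · exact hzt heq.symm
        · exact hdisj _ hstart _ htail rfl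
      have hzs : z = sA i := honlywA i z hz1 (by rw [hzt]; exact htBX j)
      exact ⟨hzs, hzs.symm.trans hzt⟩
  -- build glued walks
  set R : ∀ i : Fin k, G.Walk (aA i) (bB (σ i)) :=
    fun i => (wA i).append ((wB (σ i)).copy (hmatch i) rfl) with hR
  have hsuppR : ∀ i v, v ∈ (R i).support → v ∈ (wA i).support ∨ v ∈ (wB (σ i)).support := by
    intro i v hv
    rw [hR, mem_support_append_iff] at hv
    rcases hv with h | h
    · exact Or.inl h
    · exact Or.inr (by rw [support_copy] at h; exact h)
  have hpathR : ∀ i, (R i).IsPath := by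
    intro i
    rw [isPath_def, hR]
    rw [support_append, support_copy]
    refine List.nodup_append.mpr ⟨(hpathwA i).support_nodup,
      ((hpathwB (σ i)).support_nodup).sublist (List.tail_sublist _), ?_⟩
    rintro v hv1 _ hv2 rfl
    have hv2' : v ∈ (wB (σ i)).support := List.mem_of_mem_tail hv2
    obtain ⟨hvz, -⟩ := master i (σ i) v hv1 hv2'
    have hvt : v = tB (σ i) := (hmatch i) ▸ hvz
    have hcons : (wB (σ i)).support = tB (σ i) :: (wB (σ i)).support.tail := support_eq_cons _
    have hnodup := (hpathwB (σ i)).support_nodup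
    rw [hcons] at hnodup
    exact (List.nodup_cons.mp hnodup).1 (hvt ▸ hv2)
  refine ⟨aA, fun i => bB (σ i), R, haA, fun i => hbB (σ i), hpathR, ?_⟩
  intro i j hij v hvi hvj
  rcases hsuppR i v hvi with h1 | h1 <;> rcases hsuppR j v hvj with h2 | h2
  · exact hdisjA i j hij v (hsubwA i v h1) (hsubwA j v h2)
  · obtain ⟨hz, hs⟩ := master i (σ j) v h1 h2
    have : sA i = sA j := hs.trans (hmatch j)
    exact hij (hsAinj this)
  · obtain ⟨hz, hs⟩ := master j (σ i) v h2 h1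
    have : sA j = sA i := hs.trans (hmatch i)
    exact hij (hsAinj this.symm)
  · exact hdisjB (σ i) (σ j) (fun h => hij (hσinj h)) v (hsubwB (σ i) v h1) (hsubwB (σ j) v h2)

lemma lift_linkage [DecidableEq V] {G : SimpleGraph V} {x y : V} (hxy : G.Adj x y)
    {A B : Set V} {k : ℕ}
    (h : HasLinkage (contract G x y) ((fun v => if v = x then y else v) '' A)
          ((fun v => if v = x then y else v) '' B) k) :
    HasLinkage G A B k := by
  obtain ⟨a', b', p, ha', hb', hpath, hdisj⟩ := h
  have hfnex : ∀ v : V, (if v = x then y else v) ≠ x := by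
    intro v
    by_cases hv : v = x <;> simp [hv, hxy.ne']
  have key : ∀ i, ∃ (a b : V) (w : G.Walk a b), a ∈ A ∧ b ∈ B ∧ w.IsPath ∧
      (∀ v ∈ w.support, v ∈ (p i).support ∨ v = x) ∧
      (x ∈ w.support → y ∈ (p i).support) := by
    intro i
    obtain ⟨α, hα, hfα⟩ := ha' i
    obtain ⟨β, hβ, hfβ⟩ := hb' i
    obtain ⟨w0, hw1, hw2⟩ := lift_walk hxy (p i)
    by_cases hax : α = x <;> by_cases hbx : β = x
    · -- both endpoints come from x ; a' i = b' i = y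
      refine ⟨x, x, Walk.nil, hax ▸ hα, hbx ▸ hβ, by simp, ?_, ?_⟩
      · intro v hv
        exact Or.inr (by simpa using hv)
      · intro _
        have hay : a' i = y := by rw [← hfα, hax]; simp
        exact hay ▸ start_mem_support (p i)
    · -- α = x, β ≠ x : a' i = y, b' i = β
      have hay : a' i = y := by rw [← hfα, hax]; simp
      have hbβ : b' i = β := by rw [← hfβ]; simp [hbx]
      set w1 : G.Walk x β := Walk.cons hxy (w0.copy hay hbβ) with hw1def
      refine ⟨x, β, w1.bypass, hax ▸ hα, hβ, bypass_isPath _, ?_, ?_⟩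
      · intro v hv
        have hv' : v ∈ w1.support := support_bypass_subset _ hv
        rcases (by simpa [hw1def, support_copy] using hv' : v = x ∨ v ∈ w0.support) with rfl | hvv
        · exact Or.inr rfl
        · exact hw1 v hvv
      · intro _
        exact hay ▸ start_mem_support (p i)
    · -- α ≠ x, β = x : b' i = y
      have haα : a' i = α := by rw [← hfα]; simp [hax]
      have hby : b' i = y := by rw [← hfβ, hbx]; simp
      set w1 : G.Walk α x := (w0.copy haα hby).append (Walk.cons hxy.symm Walk.nil) with hw1def
      refine ⟨α, x, w1.bypass, hα, hbx ▸ hβ, bypass_isPath _, ?_, ?_⟩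
      · intro v hv
        have hv' : v ∈ w1.support := support_bypass_subset _ hv
        rw [hw1def, mem_support_append_iff] at hv'
        rcases hv' with hvv | hvv
        · rw [support_copy] at hvv
          exact hw1 v hvv
        · rcases (by simpa using hvv : v = y ∨ v = x) with rfl | rfl
          · exact hw1 v (hby ▸ end_mem_support w0)
          · exact Or.inr rfl
      · intro _
        exact hby ▸ end_mem_support (p i)
    · -- generic case
      have haα : a' i = α := by rw [← hfα]; simp [hax]
      have hbβ : b' i = β := by rw [← hfβ]; simp [hbx]
      refine ⟨α, β, (w0.copy haα hbβ).bypass, hα, hβ, bypass_isPath _, ?_, ?_⟩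
      · intro v hv
        have hv' : v ∈ w0.support := by
          have := support_bypass_subset _ hv
          rwa [support_copy] at this
        exact hw1 v hv'
      · intro hx
        by_contra hy
        have hv' : x ∈ w0.support := by
          have := support_bypass_subset _ hx
          rwa [support_copy] at this
        have hxp : x ∈ (p i).support := hw2 hy x hv'
        exact (contract_walk_not_mem_x (p i) (hfα ▸ hfnex α)) hxp
  have hxp : ∀ i, x ∉ (p i).support := by
    intro i
    obtain ⟨α, -, hfα⟩ := ha' i
    exact contract_walk_not_mem_x (p i) (hfα ▸ hfnex α)
  choose aF bF wF hAF hBF hpathF hsubF hxF using key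
  refine ⟨aF, bF, wF, hAF, hBF, hpathF, ?_⟩
  intro i j hij v hvi hvj
  rcases hsubF i v hvi with h1 | rfl
  · rcases hsubF j v hvj with h2 | rfl
    · exact hdisj i j hij v h1 h2
    · exact hxp i h1
  · exact hdisj i j hij y (hxF i hvi) (hxF j hvj)

lemma linkage_mono {G G' : SimpleGraph V} (hle : G ≤ G') {A B : Set V} {k : ℕ}
    (h : HasLinkage G A B k) : HasLinkage G' A B k := by
  obtain ⟨a, b, p, ha, hb, hpath, hdisj⟩ := h
  refine ⟨a, b, fun i => (p i).transfer G'
      (fun e he => edgeSet_mono hle ((p i).edges_subset_edgeSet he)), ha, hb, ?_, ?_⟩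
  · intro i
    rw [isPath_def, support_transfer]
    exact (hpath i).support_nodup
  · intro i j hij v hvi hvj
    rw [support_transfer] at hvi hvj
    exact hdisj i j hij v hvi hvj

lemma linkage_of_no_edges [Fintype V] {G : SimpleGraph V} {A B : Set V} {k : ℕ}
    (hE : ∀ x y : V, ¬G.Adj x y) (hsep : ∀ Z : Set V, Sep G A B Z → k ≤ Z.ncard) :
    HasLinkage G A B k := by
  have hAB : Sep G A B (A ∩ B) := by
    intro a b ha hb w
    cases w with
    | nil => exact ⟨a, ⟨ha, hb⟩, start_mem_support _⟩
    | cons h p => exact absurd h (hE _ _)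
  have hk : k ≤ (A ∩ B).ncard := hsep _ hAB
  obtain ⟨t, hts, htcard⟩ := Set.exists_subset_card_eq hk
  haveI : Fintype ↥t := Fintype.ofFinite _
  have hct : Fintype.card ↥t = k := by
    rw [← Nat.card_eq_fintype_card, Nat.card_coe_set_eq, htcard]
  have e := (Fintype.equivFinOfCardEq hct).symm
  refine ⟨fun i => (e i : V), fun i => (e i : V), fun _ => Walk.nil,
    fun i => (hts (e i).2).1, fun i => (hts (e i).2).2, fun i => by simp, ?_⟩
  intro i j hij v hvi hvj
  have h1 : v = (e i : V) := by simpa using hvi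
  have h2 : v = (e j : V) := by simpa using hvj
  exact hij (e.injective (Subtype.ext (h1.symm.trans h2)))

theorem mengerSetAux [Fintype V] [DecidableEq V] (k : ℕ) :
    ∀ (n : ℕ) (G : SimpleGraph V) (A B : Set V), μ G ≤ n →
      (∀ Z : Set V, Sep G A B Z → k ≤ Z.ncard) → HasLinkage G A B k := by
  intro n
  induction n with
  | zero =>
    intro G A B hμ hsep
    refine linkage_of_no_edges ?_ hsep
    intro x y hxy
    have : 0 < μ G := (Set.ncard_pos (Set.toFinite _)).mpr ⟨(x, y), hxy⟩
    omega
  | succ n ih =>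
    intro G A B hμ hsep
    by_cases hE : ∃ x y, G.Adj x y
    swap
    · push_neg at hE
      exact linkage_of_no_edges hE hsep
    obtain ⟨x, y, hxy⟩ := hE
    have hμH : μ (contract G x y) ≤ n := by
      have := μ_contract_lt (G := G) hxy; omega
    have hfnex : ∀ v : V, (if v = x then y else v) ≠ x := by
      intro v; by_cases hv : v = x <;> simp [hv, hxy.ne']
    by_cases hsmall : ∃ Y : Set V,
        Sep (contract G x y) ((fun v => if v = x then y else v) '' A)
          ((fun v => if v = x then y else v) '' B) Y ∧ Y.ncard < k
    swap
    · push_neg at hsmall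
      exact lift_linkage hxy (ih (contract G x y) _ _ hμH (fun Z hZ => hsmall Z hZ))
    obtain ⟨Y0, hY0sep, hY0card⟩ := hsmall
    have hYsep : Sep (contract G x y) ((fun v => if v = x then y else v) '' A)
        ((fun v => if v = x then y else v) '' B) (Y0 \ {x}) := by
      intro a b ha hb w
      obtain ⟨z, hz, hzw⟩ := hY0sep ha hb w
      have hax : a ≠ x := by obtain ⟨α, -, hfα⟩ := ha; exact hfα ▸ hfnex α
      have hzx : z ≠ x := by rintro rfl; exact contract_walk_not_mem_x w hax hzw
      exact ⟨z, ⟨hz, hzx⟩, hzw⟩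
    have hYcard : (Y0 \ {x}).ncard < k :=
      lt_of_le_of_lt (Set.ncard_le_ncard Set.diff_subset (Set.toFinite _)) hY0card
    have hxY : x ∉ Y0 \ {x} := by simp
    have hyY : y ∈ Y0 \ {x} := by
      by_contra hyY
      have hsepG : Sep G A B (Y0 \ {x}) := by
        intro a b ha hb w
        obtain ⟨w', hw'⟩ := proj_walk hxy w
        obtain ⟨z, hz, hzw⟩ := hYsep ⟨a, ha, rfl⟩ ⟨b, hb, rfl⟩ w'
        obtain ⟨u, hu, huz⟩ := hw' z hzw
        by_cases hux : u = x
        · exfalso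
          rw [hux, if_pos rfl] at huz
          exact hyY (huz ▸ hz)
        · rw [if_neg hux] at huz
          exact ⟨u, huz ▸ hz, hu⟩
      have := hsep _ hsepG
      omega
    -- X := (Y0 \ {x}) ∪ {x} is a minimum A-B separator of G containing x and y
    have hXsep : Sep G A B ((Y0 \ {x}) ∪ {x}) := by
      intro a b ha hb w
      by_contra hno
      push_neg at hno
      have hxw : x ∉ w.support := hno x (Or.inr rfl)
      have hax : a ≠ x := fun h => hxw (h ▸ start_mem_support w)
      have hbx : b ≠ x := fun h => hxw (h ▸ end_mem_support w)
      have hedge : ∀ e ∈ w.edges, e ∈ (contract G x y).edgeSet := by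
        intro e he
        induction e using Sym2.ind with
        | _ u v =>
          have huv : G.Adj u v := w.adj_of_mem_edges he
          have hu : u ∈ w.support := w.fst_mem_support_of_mem_edges he
          have hv : v ∈ w.support := w.snd_mem_support_of_mem_edges he
          rw [SimpleGraph.mem_edgeSet]
          exact ⟨huv.ne, fun h => hxw (h ▸ hu), fun h => hxw (h ▸ hv), Or.inl huv⟩
      obtain ⟨z, hzY, hzw⟩ := hYsep ⟨a, ha, if_neg hax⟩ ⟨b, hb, if_neg hbx⟩
        (w.transfer (contract G x y) hedge)
      rw [support_transfer] at hzw
      exact hno z (Or.inl hzY) hzw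
    have hXcard : ((Y0 \ {x}) ∪ {x}).ncard = k := by
      have h1 : ((Y0 \ {x}) ∪ {x}).ncard ≤ (Y0 \ {x}).ncard + 1 := by
        simpa using Set.ncard_union_le (Y0 \ {x}) {x}
      have h2 := hsep _ hXsep
      omega
    have hxX : x ∈ (Y0 \ {x}) ∪ {x} := Or.inr rfl
    have hyX : y ∈ (Y0 \ {x}) ∪ {x} := Or.inl hyY
    have hμG' : μ (G.deleteEdges {s(x, y)}) ≤ n := by
      have := μ_deleteEdges_lt hxy; omega
    have hle : G.deleteEdges {s(x, y)} ≤ G := deleteEdges_le _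
    -- the A-side fan separator bound
    have hsepA : ∀ Z, Sep (G.deleteEdges {s(x, y)}) A ((Y0 \ {x}) ∪ {x}) Z → k ≤ Z.ncard := by
      intro Z hZ
      apply hsep
      intro a b ha hb w
      obtain ⟨ζ, hζX, hζw⟩ := hXsep ha hb w
      obtain ⟨s, hsX, w₁, hsub, hedg, honly⟩ := exists_firstHit w _ ⟨ζ, hζw, hζX⟩
      have hefree : ∀ e ∈ w₁.edges, e ∈ (G.deleteEdges {s(x, y)}).edgeSet := by
        intro e he
        rw [edgeSet_deleteEdges]
        refine ⟨w.edges_subset_edgeSet (hedg e he), ?_⟩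
        simp only [Set.mem_singleton_iff]
        rintro rfl
        have hxs := honly x (w₁.fst_mem_support_of_mem_edges he) hxX
        have hys := honly y (w₁.snd_mem_support_of_mem_edges he) hyX
        exact hxy.ne (hxs.trans hys.symm)
      obtain ⟨z, hzZ, hzw⟩ := hZ ha hsX (w₁.transfer _ hefree)
      rw [support_transfer] at hzw
      exact ⟨z, hzZ, hsub z hzw⟩
    -- the B-side fan separator bound
    have hsepB : ∀ Z, Sep (G.deleteEdges {s(x, y)}) ((Y0 \ {x}) ∪ {x}) B Z → k ≤ Z.ncard := by
      intro Z hZ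
      apply hsep
      intro a b ha hb w
      obtain ⟨ζ, hζX, hζw⟩ := hXsep ha hb w
      obtain ⟨s, hsX, w₁, hsub, hedg, honly⟩ :=
        exists_firstHit w.reverse _ ⟨ζ, by simpa using hζw, hζX⟩
      have hefree : ∀ e ∈ w₁.reverse.edges, e ∈ (G.deleteEdges {s(x, y)}).edgeSet := by
        intro e he
        have he' : e ∈ w₁.edges := by simpa using he
        rw [edgeSet_deleteEdges]
        refine ⟨w.reverse.edges_subset_edgeSet (hedg e he'), ?_⟩
        simp only [Set.mem_singleton_iff]
        rintro rfl
        have hxs := honly x (w₁.fst_mem_support_of_mem_edges he') hxX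
        have hys := honly y (w₁.snd_mem_support_of_mem_edges he') hyX
        exact hxy.ne (hxs.trans hys.symm)
      obtain ⟨z, hzZ, hzw⟩ := hZ hsX hb (w₁.reverse.transfer _ hefree)
      rw [support_transfer] at hzw
      have hz1 : z ∈ w₁.support := by simpa using hzw
      exact ⟨z, hzZ, by simpa using hsub z hz1⟩
    have LA := ih (G.deleteEdges {s(x, y)}) A ((Y0 \ {x}) ∪ {x}) hμG' hsepA
    have LB := ih (G.deleteEdges {s(x, y)}) ((Y0 \ {x}) ∪ {x}) B hμG' hsepB
    have hsepX' : Sep (G.deleteEdges {s(x, y)}) A B ((Y0 \ {x}) ∪ {x}) := by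
      intro a b ha hb w
      obtain ⟨z, hz, hzw⟩ := hXsep ha hb
        (w.transfer G (fun e he => edgeSet_mono hle (w.edges_subset_edgeSet he)))
      rw [support_transfer] at hzw
      exact ⟨z, hz, hzw⟩
    exact linkage_mono hle (glue_linkage hsepX' hXcard LA LB)

theorem mengerSet [Fintype V] [DecidableEq V] (G : SimpleGraph V) (A B : Set V) (k : ℕ)
    (hsep : ∀ Z : Set V, Sep G A B Z → k ≤ Z.ncard) : HasLinkage G A B k :=
  mengerSetAux k (μ G) G A B le_rfl hsep

def avoidTwo (Γ : SimpleGraph V) (u v : V) : SimpleGraph V where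
  Adj a b := Γ.Adj a b ∧ a ≠ u ∧ a ≠ v ∧ b ≠ u ∧ b ≠ v
  symm := ⟨by rintro a b ⟨h, h1, h2, h3, h4⟩; exact ⟨h.symm, h3, h4, h1, h2⟩⟩
  loopless := ⟨fun a h => Γ.loopless.irrefl a h.1⟩

theorem mengerVert [Fintype V] [DecidableEq V] (Γ : SimpleGraph V) (k : ℕ) (u v : V)
    (huv : u ≠ v) (hnadj : ¬Γ.Adj u v)
    (h : ∀ X : Set V, u ∉ X → v ∉ X → X.ncard + 1 ≤ k →
      ∃ w : Γ.Walk u v, ∀ z ∈ w.support, z ∉ X) :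
    HasIDPaths Γ u v k := by
  have hsep : ∀ Z, Sep (avoidTwo Γ u v) (Γ.neighborSet u) (Γ.neighborSet v) Z → k ≤ Z.ncard := by
    intro Z hZ
    by_contra hc
    push_neg at hc
    have hZ'card : (Z \ {u, v}).ncard + 1 ≤ k := by
      have := Set.ncard_le_ncard (Set.diff_subset (s := Z) (t := {u, v})) (Set.toFinite _)
      omega
    obtain ⟨w, hw⟩ := h (Z \ {u, v}) (by simp) (by simp) hZ'card
    have hpsub : ∀ z ∈ w.bypass.support, z ∉ Z \ {u, v} :=
      fun z hz => hw z (support_bypass_subset w hz)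
    have hp : w.bypass.IsPath := bypass_isPath w
    obtain ⟨a, hua, p₁, hp₁⟩ := Walk.exists_eq_cons_of_ne huv w.bypass
    have hp₁path : p₁.IsPath ∧ u ∉ p₁.support := by
      rw [hp₁, cons_isPath_iff] at hp
      exact hp
    have hav : a ≠ v := fun hav => hnadj (hav ▸ hua)
    obtain ⟨b, hvb, q₁, hq₁⟩ := Walk.exists_eq_cons_of_ne (Ne.symm hav) p₁.reverse
    have hq₁path : q₁.IsPath ∧ v ∉ q₁.support := by
      have : p₁.reverse.IsPath := hp₁path.1.reverse
      rw [hq₁, cons_isPath_iff] at this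
      exact this
    have hmidu : u ∉ q₁.reverse.support := by
      intro hu
      apply hp₁path.2
      have h1 : u ∈ q₁.support := by simpa using hu
      have h2 : u ∈ p₁.reverse.support := by rw [hq₁]; simp [h1]
      simpa using h2
    have hmidv : v ∉ q₁.reverse.support := by
      intro hv
      exact hq₁path.2 (by simpa using hv)
    have hedge : ∀ e ∈ q₁.reverse.edges, e ∈ (avoidTwo Γ u v).edgeSet := by
      intro e he
      induction e using Sym2.ind with
      | _ c d =>
        have hcd : Γ.Adj c d := q₁.reverse.adj_of_mem_edges he
        have hc : c ∈ q₁.reverse.support := q₁.reverse.fst_mem_support_of_mem_edges he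
        have hd : d ∈ q₁.reverse.support := q₁.reverse.snd_mem_support_of_mem_edges he
        rw [SimpleGraph.mem_edgeSet]
        exact ⟨hcd, fun h => hmidu (h ▸ hc), fun h => hmidv (h ▸ hc),
          fun h => hmidu (h ▸ hd), fun h => hmidv (h ▸ hd)⟩
    obtain ⟨z, hzZ, hzw⟩ := hZ hua hvb (q₁.reverse.transfer _ hedge)
    rw [support_transfer] at hzw
    have hzu : z ≠ u := fun h => hmidu (h ▸ hzw)
    have hzv : z ≠ v := fun h => hmidv (h ▸ hzw)
    have hzp : z ∈ w.bypass.support := by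
      have h1 : z ∈ q₁.support := by simpa using hzw
      have h2 : z ∈ p₁.reverse.support := by rw [hq₁]; simp [h1]
      rw [hp₁]
      simp only [support_cons, List.mem_cons]
      exact Or.inr (by simpa using h2)
    exact hpsub z hzp ⟨hzZ, by simp [hzu, hzv]⟩
  obtain ⟨aF, bF, pF, haF, hbF, hpathF, hdisjF⟩ :=
    mengerSet (avoidTwo Γ u v) (Γ.neighborSet u) (Γ.neighborSet v) k hsep
  have hle : avoidTwo Γ u v ≤ Γ := by
    rintro a b (⟨h1, -, -, -, -⟩ : Γ.Adj a b ∧ a ≠ u ∧ a ≠ v ∧ b ≠ u ∧ b ≠ v)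
    exact h1
  have hadjne_u : ∀ a b : V, (avoidTwo Γ u v).Adj a b → a ≠ u ∧ b ≠ u := by
    rintro a b (⟨-, h1, -, h3, -⟩ : Γ.Adj a b ∧ a ≠ u ∧ a ≠ v ∧ b ≠ u ∧ b ≠ v); exact ⟨h1, h3⟩
  have hadjne_v : ∀ a b : V, (avoidTwo Γ u v).Adj a b → a ≠ v ∧ b ≠ v := by
    rintro a b (⟨-, -, h2, -, h4⟩ : Γ.Adj a b ∧ a ≠ u ∧ a ≠ v ∧ b ≠ u ∧ b ≠ v); exact ⟨h2, h4⟩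
  have hau : ∀ i, aF i ≠ u := fun i => (haF i : Γ.Adj u (aF i)).ne'
  have hav : ∀ i, aF i ≠ v := fun i h => hnadj (h ▸ haF i)
  have hbu : ∀ i, bF i ≠ u := fun i h => hnadj (Γ.adj_symm (h ▸ hbF i))
  have hbv : ∀ i, bF i ≠ v := fun i => (hbF i : Γ.Adj v (bF i)).ne'
  have hunot : ∀ i, u ∉ (pF i).support := fun i =>
    not_mem_support_of_adj_ne hadjne_u (pF i) (hau i)
  have hvnot : ∀ i, v ∉ (pF i).support := fun i =>
    not_mem_support_of_adj_ne hadjne_v (pF i) (hav i)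
  set mid : ∀ i, Γ.Walk (aF i) (bF i) := fun i =>
    (pF i).transfer Γ (fun e he => edgeSet_mono hle ((pF i).edges_subset_edgeSet he)) with hmid
  set W : ∀ i : Fin k, Γ.Walk u v := fun i =>
    Walk.cons ((Γ.mem_neighborSet u (aF i)).mp (haF i)) ((mid i).append (Walk.cons (Γ.adj_symm (hbF i)) Walk.nil)) with hW
  have hsuppW : ∀ i, (W i).support = u :: ((pF i).support ++ [v]) := by
    intro i
    rw [hW]
    simp only [support_cons, support_append, hmid, support_transfer]
    simp
  have hWpath : ∀ i, (W i).IsPath := by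
    intro i
    rw [isPath_def, hsuppW i]
    refine List.nodup_cons.mpr ⟨?_, List.nodup_append.mpr
      ⟨(by rw [hmid] at *; exact ((hpathF i).support_nodup)), List.nodup_singleton v, ?_⟩⟩
    · intro hmem
      rcases List.mem_append.mp hmem with h1 | h1
      · exact hunot i h1
      · exact huv (by simpa using h1)
    · rintro z hz1 _ hz2 rfl
      have : z = v := by simpa using hz2
      exact hvnot i (this ▸ hz1)
  refine ⟨fun i => ⟨W i, hWpath i⟩, ?_, ?_⟩
  · intro i j hij
    by_contra hne
    have hsupp : (W i).support = (W j).support := by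
      rw [show W i = W j from congrArg Subtype.val hij]
    have hai : aF i ∈ (pF j).support := by
      have h1 : aF i ∈ (W i).support := by
        rw [hsuppW i]
        simp [start_mem_support]
      rw [hsupp, hsuppW j] at h1
      rcases List.mem_cons.mp h1 with h2 | h2
      · exact absurd h2 (hau i)
      · rcases List.mem_append.mp h2 with h3 | h3
        · exact h3
        · exact absurd (by simpa using h3) (hav i)
    exact hdisjF i j hne (aF i) (start_mem_support _) hai
  · intro i j hij z hzi hzj
    rw [hsuppW i] at hzi
    rw [hsuppW j] at hzj
    rcases List.mem_cons.mp hzi with rfl | hzi'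
    · exact Or.inl rfl
    rcases List.mem_append.mp hzi' with hzi'' | hzi''
    swap
    · exact Or.inr (by simpa using hzi'')
    rcases List.mem_cons.mp hzj with rfl | hzj'
    · exact Or.inl rfl
    rcases List.mem_append.mp hzj' with hzj'' | hzj''
    swap
    · exact Or.inr (by simpa using hzj'')
    exact absurd (hdisjF i j hij z hzi'' hzj'') (fun h => h)

theorem kconn_of_deletion [Fintype V] [DecidableEq V] (Γ : SimpleGraph V) (k : ℕ)
    (hcard : k + 1 ≤ Nat.card V)
    (hdel : ∀ X : Set V, X.ncard + 1 ≤ k → ∀ a b : V, a ∉ X → b ∉ X →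
      ∃ w : Γ.Walk a b, ∀ z ∈ w.support, z ∉ X) :
    KConnected Γ k := by
  intro u v huv
  by_cases hadj : Γ.Adj u v
  swap
  · exact mengerVert Γ k u v huv hadj (fun X hu hv hX => hdel X hX u v hu hv)
  rcases Nat.lt_or_ge k 2 with hk2 | hk2
  · -- k = 0 or 1
    interval_cases k
    · exact ⟨fun i => i.elim0, fun i => i.elim0, fun i => i.elim0⟩
    · refine ⟨fun _ => ⟨Walk.cons hadj Walk.nil, by simp [huv, hadj]⟩,
        fun a b _ => Subsingleton.elim a b, ?_⟩
      intro i j hij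
      exact absurd (Subsingleton.elim i j) hij
  obtain ⟨k', rfl⟩ : ∃ k', k = k' + 1 := ⟨k - 1, by omega⟩
  have hnadj₂ : ¬(Γ.deleteEdges {s(u, v)}).Adj u v := by simp [deleteEdges_adj]
  have hdel₂ : ∀ X : Set V, u ∉ X → v ∉ X → X.ncard + 1 ≤ k' →
      ∃ w : (Γ.deleteEdges {s(u, v)}).Walk u v, ∀ z ∈ w.support, z ∉ X := by
    intro X hu hv hX
    have hXcard : (X ∪ {u, v}).ncard < Nat.card V := by
      have h1 := Set.ncard_union_le X ({u, v} : Set V)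
      have h2 : ({u, v} : Set V).ncard ≤ 2 := by
        have h3 := Set.ncard_insert_le u ({v} : Set V)
        simpa [Set.ncard_singleton] using h3
      omega
    obtain ⟨w₀, hw₀⟩ : ∃ w₀, w₀ ∉ X ∪ {u, v} := by
      by_contra hA
      push_neg at hA
      have := Set.eq_univ_of_forall hA
      rw [this, Set.ncard_univ] at hXcard
      omega
    have hw₀X : w₀ ∉ X := fun h => hw₀ (Or.inl h)
    have hw₀u : w₀ ≠ u := fun h => hw₀ (Or.inr (by simp [h]))
    have hw₀v : w₀ ≠ v := fun h => hw₀ (Or.inr (by simp [h]))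
    have hcard1 : ∀ c : V, (X ∪ {c}).ncard + 1 ≤ k' + 1 := by
      intro c
      have h1 := Set.ncard_union_le X ({c} : Set V)
      rw [Set.ncard_singleton] at h1
      omega
    obtain ⟨w1, hw1⟩ := hdel (X ∪ {u}) (hcard1 u) w₀ v
      (by rintro (h | h)
          · exact hw₀X h
          · exact hw₀u (by simpa using h))
      (by rintro (h | h)
          · exact hv h
          · exact huv (Eq.symm (by simpa using h)))
    obtain ⟨w2, hw2⟩ := hdel (X ∪ {v}) (hcard1 v) w₀ u
      (by rintro (h | h)
          · exact hw₀X h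
          · exact hw₀v (by simpa using h))
      (by rintro (h | h)
          · exact hu h
          · exact huv (by simpa using h))
    have hedge1 : ∀ e ∈ w1.edges, e ∈ (Γ.deleteEdges {s(u, v)}).edgeSet := by
      intro e he
      rw [edgeSet_deleteEdges]
      refine ⟨w1.edges_subset_edgeSet he, ?_⟩
      simp only [Set.mem_singleton_iff]
      rintro rfl
      exact (hw1 u (w1.fst_mem_support_of_mem_edges he)) (Or.inr rfl)
    have hedge2 : ∀ e ∈ w2.edges, e ∈ (Γ.deleteEdges {s(u, v)}).edgeSet := by
      intro e he
      rw [edgeSet_deleteEdges]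
      refine ⟨w2.edges_subset_edgeSet he, ?_⟩
      simp only [Set.mem_singleton_iff]
      rintro rfl
      exact (hw2 v (w2.snd_mem_support_of_mem_edges he)) (Or.inr rfl)
    refine ⟨((w2.transfer _ hedge2).reverse).append (w1.transfer _ hedge1), ?_⟩
    intro z hz
    rw [mem_support_append_iff] at hz
    rcases hz with hz | hz
    · have : z ∈ w2.support := by
        have := hz
        rw [support_reverse] at this
        rw [← support_transfer _ hedge2]
        simpa using this
      exact fun hX' => hw2 z this (Or.inl hX')
    · rw [support_transfer] at hz
      exact fun hX' => hw1 z hz (Or.inl hX')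
  obtain ⟨P, hPinj, hPdisj⟩ := mengerVert _ k' u v huv hnadj₂ hdel₂
  have hle₂ : Γ.deleteEdges {s(u, v)} ≤ Γ := deleteEdges_le _
  set Q : Fin k' → Γ.Path u v := fun i =>
    ⟨(P i).val.transfer Γ (fun e he => edgeSet_mono hle₂ ((P i).val.edges_subset_edgeSet he)),
      by rw [isPath_def, support_transfer]; exact (P i).prop.support_nodup⟩ with hQ
  set E : Γ.Path u v := ⟨Walk.cons hadj Walk.nil, by simp [huv, hadj]⟩ with hEdef
  have hQE : ∀ i, Q i ≠ E := by
    intro i hQE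
    have h1 : s(u, v) ∈ (Q i).val.edges := by
      rw [hQE, hEdef]
      simp
    rw [hQ] at h1
    simp only at h1
    rw [edges_transfer] at h1
    have h2 := (P i).val.edges_subset_edgeSet h1
    rw [edgeSet_deleteEdges] at h2
    exact h2.2 rfl
  have hQinj : Function.Injective Q := by
    intro i j hij
    apply hPinj
    apply Subtype.ext
    apply eq_of_support_eq
    have h1 : (Q i).val.support = (Q j).val.support := by rw [hij]
    rw [hQ] at h1
    simp only at h1
    rwa [support_transfer, support_transfer] at h1
  refine ⟨Fin.cons E Q, ?_, ?_⟩
  · intro i j hij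
    rcases Fin.eq_zero_or_eq_succ i with rfl | ⟨i', rfl⟩ <;>
      rcases Fin.eq_zero_or_eq_succ j with rfl | ⟨j', rfl⟩
    · rfl
    · rw [Fin.cons_zero, Fin.cons_succ] at hij
      exact absurd hij.symm (hQE j')
    · rw [Fin.cons_zero, Fin.cons_succ] at hij
      exact absurd hij (hQE i')
    · rw [Fin.cons_succ, Fin.cons_succ] at hij
      rw [hQinj hij]
  · intro i j hij z hzi hzj
    have hsuppE : (E : Γ.Path u v).val.support = [u, v] := by rw [hEdef]; simp
    rcases Fin.eq_zero_or_eq_succ i with rfl | ⟨i', rfl⟩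
    · rw [Fin.cons_zero] at hzi
      rw [hsuppE] at hzi
      simpa using hzi
    rcases Fin.eq_zero_or_eq_succ j with rfl | ⟨j', rfl⟩
    · rw [Fin.cons_zero] at hzj
      rw [hsuppE] at hzj
      simpa using hzj
    rw [Fin.cons_succ] at hzi hzj
    have hzi' : z ∈ (P i').val.support := by
      rw [hQ] at hzi
      simp only at hzi
      rwa [support_transfer] at hzi
    have hzj' : z ∈ (P j').val.support := by
      rw [hQ] at hzj
      simp only at hzj
      rwa [support_transfer] at hzj
    exact hPdisj i' j' (fun h => hij (by rw [h])) z hzi' hzj'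

lemma exists_walk_avoiding {α : Type*} [Finite α] {Γ : SimpleGraph α} {u v : α} {k : ℕ}
    (h : HasIDPaths Γ u v k) (X : Set α) (hX : X.ncard < k) (hu : u ∉ X) (hv : v ∉ X) :
    ∃ w : Γ.Walk u v, ∀ z ∈ w.support, z ∉ X := by
  obtain ⟨P, hPinj, hPdisj⟩ := h
  by_contra hno
  push_neg at hno
  have hhit : ∀ i : Fin k, ∃ z, z ∈ (P i).val.support ∧ z ∈ X := by
    intro i
    obtain ⟨z, hz1, hz2⟩ := hno (P i).val
    exact ⟨z, hz1, hz2⟩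
  choose F hFsupp hFX using hhit
  have hFinj : Function.Injective F := by
    intro i j hij
    by_contra hne
    rcases hPdisj i j hne (F i) (hFsupp i) (hij ▸ hFsupp j) with h1 | h1
    · exact hu (h1 ▸ hFX i)
    · exact hv (h1 ▸ hFX i)
  have hk : k ≤ X.ncard := by
    have h1 : (Set.range F).ncard = k := by
      rw [← Set.image_univ, Set.ncard_image_of_injective _ hFinj, Set.ncard_univ,
        Nat.card_eq_fintype_card, Fintype.card_fin]
    have h2 : Set.range F ⊆ X := by rintro z ⟨i, rfl⟩; exact hFX i
    calc k = (Set.range F).ncard := h1.symm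
      _ ≤ X.ncard := Set.ncard_le_ncard h2 (Set.toFinite X)
  omega

lemma card_of_hasIDPaths {α : Type*} [Finite α] {Γ : SimpleGraph α} {u v : α} {k : ℕ}
    (huv : u ≠ v) (h : HasIDPaths Γ u v k) : k + 1 ≤ Nat.card α := by
  obtain ⟨P, hPinj, hPdisj⟩ := h
  have hcard2 : 2 ≤ Nat.card α := by
    have h1 : ({u, v} : Set α).ncard = 2 := Set.ncard_pair huv
    have h2 : ({u, v} : Set α).ncard ≤ (Set.univ : Set α).ncard :=
      Set.ncard_le_ncard (Set.subset_univ _) (Set.toFinite _)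
    rwa [Set.ncard_univ, h1] at h2
  rcases Nat.eq_zero_or_pos k with rfl | hk
  · omega
  choose c hadjc rest hresteq using fun i => Walk.exists_eq_cons_of_ne huv (P i).val
  have hcsupp : ∀ i, c i ∈ (P i).val.support := by
    intro i
    rw [hresteq i]
    simp [start_mem_support]
  have hcu : ∀ i, c i ≠ u := fun i => (hadjc i).ne'
  -- the set of indices whose second vertex is v is a subsingleton
  have hSsub : ∀ i j : Fin k, c i = v → c j = v → i = j := by
    intro i j hi hj
    apply hPinj
    apply Subtype.ext
    have hresti : rest i = Walk.nil.copy hi.symm rfl := by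
      have : (rest i).IsPath := by
        have hp := (P i).prop
        rw [hresteq i, cons_isPath_iff] at hp
        exact hp.1
      rcases hi with rfl
      rwa [isPath_iff_eq_nil, ← Walk.copy_rfl_rfl (Walk.nil)] at this
    have hrestj : rest j = Walk.nil.copy hj.symm rfl := by
      have : (rest j).IsPath := by
        have hp := (P j).prop
        rw [hresteq j, cons_isPath_iff] at hp
        exact hp.1
      rcases hj with rfl
      rwa [isPath_iff_eq_nil, ← Walk.copy_rfl_rfl (Walk.nil)] at this
    rw [hresteq i, hresteq j, hresti, hrestj]
    apply eq_of_support_eq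
    simp [support_copy]
  -- count
  set S : Set (Fin k) := {i | c i = v} with hS
  have hS1 : S.ncard ≤ 1 := by
    by_cases hSe : S = ∅
    · simp [hSe]
    · obtain ⟨i, hi⟩ := Set.nonempty_iff_ne_empty.mpr hSe
      have hsub : S ⊆ {i} := fun j hj => by
        have := hSsub j i hj hi
        simp [this]
      have := Set.ncard_le_ncard hsub (Set.toFinite _)
      simpa using this
  have hcompl : S.ncard + Sᶜ.ncard = k := by
    have := Set.ncard_add_ncard_compl S
    rwa [Nat.card_eq_fintype_card, Fintype.card_fin] at this
  have hinjOn : Set.InjOn c Sᶜ := by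
    intro i hi j hj hij
    by_contra hne
    rcases hPdisj i j hne (c i) (hcsupp i) (hij ▸ hcsupp j) with h1 | h1
    · exact hcu i h1
    · exact hi (hS ▸ h1)
  have himg : c '' Sᶜ ⊆ Set.univ \ {u, v} := by
    rintro z ⟨i, hi, rfl⟩
    refine ⟨Set.mem_univ _, ?_⟩
    simp only [Set.mem_insert_iff, Set.mem_singleton_iff]
    push_neg
    exact ⟨hcu i, hi⟩
  have h1 : (c '' Sᶜ).ncard = Sᶜ.ncard := Set.ncard_image_of_injOn hinjOn
  have h2 : (c '' Sᶜ).ncard ≤ (Set.univ \ {u, v} : Set α).ncard :=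
    Set.ncard_le_ncard himg (Set.toFinite _)
  have h3 : (Set.univ \ {u, v} : Set α).ncard = Nat.card α - 2 := by
    rw [Set.ncard_diff (Set.subset_univ _) (Set.toFinite _), Set.ncard_univ, Set.ncard_pair huv]
  omega

lemma ncard_le_one_of_subsingleton' {α : Type*} {s : Set α} (hs : s.Subsingleton) :
    s.ncard ≤ 1 := by
  by_cases hSe : s = ∅
  · simp [hSe]
  · obtain ⟨i, hi⟩ := Set.nonempty_iff_ne_empty.mpr hSe
    have hsub : s ⊆ {i} := fun j hj => hs hj hi
    have := Set.ncard_le_ncard hsub (Set.toFinite _)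
    simpa using this

-- MORE
end MengerAux

/-- Feasibility of the algorithm's output. If `T` is an `m`-dominating set of `G`
(`m ≥ k ≥ 1`), `S, P ⊆ V \ T`, `R ⊆ T`, and `J` is a set of edges on `R`
such that `G[T ∪ S] ∪ J` is `k`-connected and for every edge `uv ∈ J` the
induced subgraph `G[T ∪ S ∪ P]` contains `k` internally disjoint `u`-`v` paths,
then `T ∪ S ∪ P` is a `(k,m)`-cds of `G`: it is an `m`-dominating set and
the induced subgraph `G[T ∪ S ∪ P]` is `k`-connected. -/
theorem solution_is_km_cds
    {V : Type*} [Fintype V] (G : SimpleGraph V) (k m : ℕ)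
    (hk : 1 ≤ k) (hkm : k ≤ m)
    (T S P : Set V) (hS : S ⊆ Tᶜ) (hP : P ⊆ Tᶜ)
    (hdom : ∀ v : V, v ∉ T → m ≤ (T ∩ G.neighborSet v).ncard)
    (R : Set V) (hRT : R ⊆ T)
    (J : SimpleGraph V) (hJR : ∀ u v : V, J.Adj u v → u ∈ R ∧ v ∈ R)
    (hconn : KConnected ((G ⊔ J).induce (T ∪ S)) k)
    (hpaths : ∀ u v : ↥(T ∪ S ∪ P), J.Adj (u : V) (v : V) →
      HasIDPaths (G.induce (T ∪ S ∪ P)) u v k) :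
    (∀ v : V, v ∉ T ∪ S ∪ P → m ≤ ((T ∪ S ∪ P) ∩ G.neighborSet v).ncard) ∧
    KConnected (G.induce (T ∪ S ∪ P)) k := by
  classical
  open MengerAux in
  constructor
  · intro v hv
    have hvT : v ∉ T := fun h => hv (Or.inl (Or.inl h))
    refine le_trans (hdom v hvT) (Set.ncard_le_ncard ?_ (Set.toFinite _))
    exact Set.inter_subset_inter_left _ (fun x hx => Or.inl (Or.inl hx))
  · by_cases hex : ∃ u v : ↥(T ∪ S ∪ P), u ≠ v
    swap
    · intro u v huv
      exact absurd ⟨u, v, huv⟩ hex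
    have hcard : k + 1 ≤ Nat.card ↥(T ∪ S ∪ P) := by
      by_cases hTS : ∃ a b : ↥(T ∪ S), a ≠ b
      · obtain ⟨a, b, hab⟩ := hTS
        have h1 : k + 1 ≤ Nat.card ↥(T ∪ S) := card_of_hasIDPaths hab (hconn a b hab)
        have h2 : Nat.card ↥(T ∪ S) ≤ Nat.card ↥(T ∪ S ∪ P) := by
          rw [Nat.card_coe_set_eq, Nat.card_coe_set_eq]
          exact Set.ncard_le_ncard Set.subset_union_left (Set.toFinite _)
        omega
      · push_neg at hTS
        obtain ⟨u0, v0, huv0⟩ := hex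
        have hnontriv : Nontrivial ↥(T ∪ S ∪ P) := ⟨u0, v0, huv0⟩
        have h2 : 2 ≤ Nat.card ↥(T ∪ S ∪ P) := Finite.one_lt_card_iff_nontrivial.mpr hnontriv
        have hw0 : ∃ w0 : V, w0 ∈ T ∪ S ∪ P ∧ w0 ∉ T := by
          by_contra hc
          push_neg at hc
          apply huv0
          have hu0 : (u0 : V) ∈ T ∪ S := Or.inl (hc u0 u0.2)
          have hv0 : (v0 : V) ∈ T ∪ S := Or.inl (hc v0 v0.2)
          have := hTS ⟨u0, hu0⟩ ⟨v0, hv0⟩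
          exact Subtype.ext (Subtype.mk_eq_mk.mp this)
        obtain ⟨w0, hw0W, hw0T⟩ := hw0
        have hsub : (T ∪ S : Set V).Subsingleton := by
          intro x hx y hy
          exact congrArg Subtype.val (hTS ⟨x, hx⟩ ⟨y, hy⟩)
        have hm1 : m ≤ 1 := by
          refine le_trans (hdom w0 hw0T) (ncard_le_one_of_subsingleton' ?_)
          exact Set.Subsingleton.anti hsub (fun x hx => Or.inl hx.1)
        omega
    have hdel : ∀ X : Set ↥(T ∪ S ∪ P), X.ncard + 1 ≤ k → ∀ a b : ↥(T ∪ S ∪ P),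
        a ∉ X → b ∉ X →
        ∃ w : (G.induce (T ∪ S ∪ P)).Walk a b, ∀ z ∈ w.support, z ∉ X := by
      intro X hXk a b haX hbX
      have hXlt : X.ncard < k := by omega
      have hXVcard : (Subtype.val '' X).ncard = X.ncard :=
        Set.ncard_image_of_injective X Subtype.val_injective
      -- Step A : walk from any vertex to T ∪ S
      have stepA : ∀ c : ↥(T ∪ S ∪ P), c ∉ X → ∃ (t : V) (ht : t ∈ T ∪ S),
          (⟨t, Or.inl ht⟩ : ↥(T ∪ S ∪ P)) ∉ X ∧
          ∃ w : (G.induce (T ∪ S ∪ P)).Walk c ⟨t, Or.inl ht⟩, ∀ z ∈ w.support, z ∉ X := by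
        intro c hcX
        by_cases hcTS : (c : V) ∈ T ∪ S
        · have hceq : (⟨(c : V), Or.inl hcTS⟩ : ↥(T ∪ S ∪ P)) = c := Subtype.ext rfl
          refine ⟨c, hcTS, by rw [hceq]; exact hcX, Walk.nil.copy rfl hceq.symm, ?_⟩
          intro z hz
          rw [support_copy] at hz
          have : z = c := by
            have := by simpa using hz
            rw [this]
          rw [this]
          exact hcX
        · have hcP : (c : V) ∈ P := by
            rcases c.2 with h | h
            · exact absurd h hcTS
            · exact h
          have hcT : (c : V) ∉ T := hP hcP
          have hm := hdom c hcT
          have hfind : ∃ t ∈ T ∩ G.neighborSet (c : V), t ∉ Subtype.val '' X := by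
            by_contra hc2
            push_neg at hc2
            have := Set.ncard_le_ncard hc2 (Set.toFinite _)
            omega
          obtain ⟨t, ⟨htT, htN⟩, htX⟩ := hfind
          have htW : t ∈ T ∪ S := Or.inl htT
          have hadj : (G.induce (T ∪ S ∪ P)).Adj c ⟨t, Or.inl htW⟩ := htN
          refine ⟨t, htW, fun hmem => htX ⟨_, hmem, rfl⟩, Walk.cons hadj Walk.nil, ?_⟩
          intro z hz
          rcases (by simpa using hz : z = c ∨ z = (⟨t, Or.inl htW⟩ : ↥(T ∪ S ∪ P))) with rfl | rfl
          · exact hcX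
          · exact fun hmem => htX ⟨_, hmem, rfl⟩
      -- relay : convert (G ⊔ J)-walks in T ∪ S into G-walks in T ∪ S ∪ P
      have relay : ∀ (c d : ↥(T ∪ S)) (w : ((G ⊔ J).induce (T ∪ S)).Walk c d),
          (∀ z ∈ w.support, (⟨z.val, Or.inl z.2⟩ : ↥(T ∪ S ∪ P)) ∉ X) →
          ∃ w' : (G.induce (T ∪ S ∪ P)).Walk ⟨c.val, Or.inl c.2⟩ ⟨d.val, Or.inl d.2⟩,
            ∀ z ∈ w'.support, z ∉ X := by
        intro c d w
        induction w with
        | nil =>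
          rename_i c0
          intro havoid
          refine ⟨Walk.nil, ?_⟩
          intro z hz
          have hzc : z = (⟨c0.val, Or.inl c0.2⟩ : ↥(T ∪ S ∪ P)) := by simpa using hz
          rw [hzc]
          exact havoid c0 (start_mem_support _)
        | @cons c e d h p ih =>
          intro havoid
          have hcX2 : (⟨c.val, Or.inl c.2⟩ : ↥(T ∪ S ∪ P)) ∉ X :=
            havoid c (start_mem_support _)
          have heX2 : (⟨e.val, Or.inl e.2⟩ : ↥(T ∪ S ∪ P)) ∉ X :=
            havoid e (by simp [start_mem_support])
          obtain ⟨w2, hw2⟩ := ih (fun z hz => havoid z (by simp [hz]))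
          have hce : (G ⊔ J).Adj (c : V) (e : V) := h
          rcases (sup_adj _ _ _ _).mp hce with hG | hJ
          · have hadj : (G.induce (T ∪ S ∪ P)).Adj ⟨c.val, Or.inl c.2⟩ ⟨e.val, Or.inl e.2⟩ := hG
            refine ⟨Walk.cons hadj w2, ?_⟩
            intro z hz
            rcases (by simpa using hz :
                z = (⟨c.val, Or.inl c.2⟩ : ↥(T ∪ S ∪ P)) ∨ z ∈ w2.support) with rfl | hz'
            · exact hcX2
            · exact hw2 z hz'
          · have hid := hpaths ⟨c.val, Or.inl c.2⟩ ⟨e.val, Or.inl e.2⟩ hJ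
            obtain ⟨seg, hseg⟩ := exists_walk_avoiding hid X hXlt hcX2 heX2
            refine ⟨seg.append w2, ?_⟩
            intro z hz
            rcases (mem_support_append_iff _ _).mp hz with hz' | hz'
            · exact hseg z hz'
            · exact hw2 z hz'
      -- assemble
      obtain ⟨ta, hta, htaX, wa, hwa⟩ := stepA a haX
      obtain ⟨tb, htb, htbX, wb, hwb⟩ := stepA b hbX
      by_cases htab : ta = tb
      · subst htab
        refine ⟨wa.append wb.reverse, ?_⟩
        intro z hz
        rcases (mem_support_append_iff _ _).mp hz with hz' | hz'
        · exact hwa z hz'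
        · exact hwb z (by rwa [support_reverse, List.mem_reverse] at hz')
      · have hne : (⟨ta, hta⟩ : ↥(T ∪ S)) ≠ ⟨tb, htb⟩ :=
          fun h => htab (Subtype.mk_eq_mk.mp h)
        have hid := hconn ⟨ta, hta⟩ ⟨tb, htb⟩ hne
        set X2 : Set ↥(T ∪ S) :=
          {z : ↥(T ∪ S) | (⟨z.val, Or.inl z.2⟩ : ↥(T ∪ S ∪ P)) ∈ X} with hX2
        have hX2card : X2.ncard ≤ X.ncard := by
          have hinj : Set.InjOn
              (fun z : ↥(T ∪ S) => (⟨z.val, Or.inl z.2⟩ : ↥(T ∪ S ∪ P))) X2 :=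
            fun z1 _ z2 _ h => Subtype.ext (Subtype.mk_eq_mk.mp h)
          have himg : (fun z : ↥(T ∪ S) => (⟨z.val, Or.inl z.2⟩ : ↥(T ∪ S ∪ P))) '' X2 ⊆ X := by
            rintro _ ⟨z, hz, rfl⟩
            exact hz
          calc X2.ncard = _ := (Set.ncard_image_of_injOn hinj).symm
            _ ≤ X.ncard := Set.ncard_le_ncard himg (Set.toFinite _)
        obtain ⟨wm, hwm⟩ := exists_walk_avoiding hid X2 (by omega) htaX htbX
        obtain ⟨wr, hwr⟩ := relay ⟨ta, hta⟩ ⟨tb, htb⟩ wm (fun z hz => hwm z hz)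
        refine ⟨wa.append (wr.append wb.reverse), ?_⟩
        intro z hz
        rcases (mem_support_append_iff _ _).mp hz with hz' | hz'
        · exact hwa z hz'
        · rcases (mem_support_append_iff _ _).mp hz' with hz'' | hz''
          · exact hwr z hz''
          · exact hwb z (by rwa [support_reverse, List.mem_reverse] at hz'')
    exact kconn_of_deletion _ k hcard hdel
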